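/- Let S and T be probability distributions on X × Y with marginals S_X, T_X, let F be a class of score functions, and fix ρ > 0, ε > 0, p ≥ 1 (all relevant integrands measurable and integrable). Suppose f* ∈ F minimizes f ↦ R^{(ρ)}_T(f) + R^{(ρ)}_S(f) over F, and set λ = R^{(ρ)}_T(f*) + R^{(ρ)}_S(f*). Then for every f ∈ F: R^{rob}_T(f) ≤ R^{(ρ)}_S(f) + { disp^{rob,(ρ)}_{T_X}(f*, f) − disp^{(ρ)}_{S_X}(f*, f) } + λ. -/
import Mathlib


noncomputable section
open MeasureTheory Finset Set

namespace RobustUDA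

/-- The input space: `ℝ^d`. -/
abbrev Inp (d : ℕ) := Fin d → ℝ

variable {d C : ℕ}

/-- `ℓ_p`-norm of a vector in `ℝ^d`. -/
def pnorm (p : ℝ) (v : Inp d) : ℝ := (∑ i, |v i| ^ p) ^ (1 / p)

/-- The `ε`-ball centered at `x` in the `ℓ_p`-norm. -/
def ball (p ε : ℝ) (x : Inp d) : Set (Inp d) := {x' | pnorm p (fun i => x i - x' i) ≤ ε}

open Classical in
/-- Indicator function of a proposition, real valued. -/
def ind (P : Prop) : ℝ := if P then 1 else 0

/-- The ramp function `Φ_ρ`. -/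
def ramp (ρ t : ℝ) : ℝ := if t ≤ 0 then 1 else if t ≤ ρ then 1 - t / ρ else 0

/-- The margin `M_f(x,y) = f_y(x) - max_{y' ≠ y} f_{y'}(x)`. -/
def margin (f : Inp d → Fin C → ℝ) (x : Inp d) (y : Fin C) : ℝ :=
  f x y - sSup (f x '' {y' | y' ≠ y})

/-- Standard (0-1) risk of a classifier `hf` on a distribution `D` on `X × Y`. -/
def stdRisk (D : Measure (Inp d × Fin C)) (hf : Inp d → Fin C) : ℝ :=
  ∫ z, ind (z.2 ≠ hf z.1) ∂D

/-- Robust (0-1) risk of a classifier `hf`. -/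
def robustRisk (p ε : ℝ) (D : Measure (Inp d × Fin C)) (hf : Inp d → Fin C) : ℝ :=
  ∫ z, sSup ((fun x' => ind (z.2 ≠ hf x')) '' ball p ε z.1) ∂D

/-- Margin risk `R^{(ρ)}_D(f)`. -/
def marginRisk (ρ : ℝ) (D : Measure (Inp d × Fin C)) (f : Inp d → Fin C → ℝ) : ℝ :=
  ∫ z, ramp ρ (margin f z.1 z.2) ∂D

/-- Robust margin risk `R^{rob,(ρ)}_D(f)`. -/
def robustMarginRisk (p ε ρ : ℝ) (D : Measure (Inp d × Fin C)) (f : Inp d → Fin C → ℝ) : ℝ :=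
  ∫ z, sSup ((fun x' => ramp ρ (margin f x' z.2)) '' ball p ε z.1) ∂D

/-- Margin disparity `disp^{(ρ)}_{D_X}(f', f)`, where `hf'` is the classifier induced by `f'`. -/
def marginDisp (ρ : ℝ) (DX : Measure (Inp d)) (hf' : Inp d → Fin C)
    (f : Inp d → Fin C → ℝ) : ℝ :=
  ∫ x, ramp ρ (margin f x (hf' x)) ∂DX

/-- 0-1 robust disparity `disp^{rob}_{D_X}(f', f)`. -/
def robDisp (p ε : ℝ) (DX : Measure (Inp d)) (hf' hf : Inp d → Fin C) : ℝ :=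
  ∫ x, sSup ((fun x' => ind (hf' x ≠ hf x')) '' ball p ε x) ∂DX

/-- Robust margin disparity `disp^{rob,(ρ)}_{D_X}(f', f)`. -/
def robMarginDisp (p ε ρ : ℝ) (DX : Measure (Inp d)) (hf' : Inp d → Fin C)
    (f : Inp d → Fin C → ℝ) : ℝ :=
  ∫ x, sSup ((fun x' => ramp ρ (margin f x' (hf' x))) '' ball p ε x) ∂DX

/-- Point-wise local Lipschitz constant `L_f(x, ε)` (w.r.t. the `ℓ_p` ball and `ℓ₁` output norm). -/
def locLip (p ε : ℝ) (f : Inp d → Fin C → ℝ) (x : Inp d) : ℝ :=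
  sSup ((fun x' => (∑ c, |f x' c - f x c|) / pnorm p (fun i => x' i - x i)) ''
    {x' | x' ∈ ball p ε x ∧ x' ≠ x})

/-- Topological support of a measure on the input space. -/
def msupport (μ : Measure (Inp d)) : Set (Inp d) :=
  {x | ∀ U : Set (Inp d), IsOpen U → x ∈ U → 0 < μ U}

/-- Local Lipschitz constant `L_f(D_X, ε)` over the support of `D_X`. -/
def locLipOn (p ε : ℝ) (f : Inp d → Fin C → ℝ) (μ : Measure (Inp d)) : ℝ :=
  sSup (locLip p ε f '' msupport μ)

/-- Robust margin disparity discrepancy `d^{rob,(ρ)}_{f,F}(S_X, T_X)` where `cl` assigns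
to each score function its induced classifier. -/
def discrepancy (p ε ρ : ℝ) (F : Set (Inp d → Fin C → ℝ))
    (cl : (Inp d → Fin C → ℝ) → Inp d → Fin C)
    (SX TX : Measure (Inp d)) (f : Inp d → Fin C → ℝ) : ℝ :=
  sSup ((fun f' => robMarginDisp p ε ρ TX (cl f') f - marginDisp ρ SX (cl f') f) '' F)

/-- The class `Π₁F` of component functions of score functions in `F`. -/
def Pi1 (F : Set (Inp d → Fin C → ℝ)) : Set (Inp d → ℝ) :=
  {g | ∃ f ∈ F, ∃ y : Fin C, g = fun x => f x y}

/-- The class `Π_H F` where `H = {h_f : f ∈ F}` is given by the classifier assignment `cl`. -/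
def PiH (F : Set (Inp d → Fin C → ℝ)) (cl : (Inp d → Fin C → ℝ) → Inp d → Fin C) :
    Set (Inp d → ℝ) :=
  {g | ∃ f ∈ F, ∃ f' ∈ F, g = fun x => f x (cl f' x)}

/-- Rademacher complexity `ℜ_{n,D}(G)` of a class `G` of real functions on `Z`. -/
def rademacher (n : ℕ) {Z : Type*} [MeasurableSpace Z] (D : Measure Z) (G : Set (Z → ℝ)) : ℝ :=
  ∫ z : Fin n → Z, ∫ σ : Fin n → Bool,
      sSup ((fun g => (n : ℝ)⁻¹ * ∑ i, (if σ i then (1 : ℝ) else -1) * g (z i)) '' G)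
    ∂(Measure.pi fun _ => (PMF.uniformOfFintype Bool).toMeasure) ∂(Measure.pi fun _ => D)



namespace Aux

variable {d C : ℕ}

lemma ramp_nonneg {ρ : ℝ} (hρ : 0 < ρ) (t : ℝ) : 0 ≤ ramp ρ t := by
  unfold ramp
  split_ifs with h1 h2
  · norm_num
  · have : t / ρ ≤ 1 := by rw [div_le_one hρ]; exact h2
    linarith
  · exact le_refl 0

lemma ramp_le_one {ρ : ℝ} (hρ : 0 < ρ) (t : ℝ) : ramp ρ t ≤ 1 := by
  unfold ramp
  split_ifs with h1 h2
  · exact le_refl 1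
  · push_neg at h1
    have : 0 ≤ t / ρ := div_nonneg h1.le hρ.le
    linarith
  · norm_num

lemma ramp_of_nonpos {ρ t : ℝ} (ht : t ≤ 0) : ramp ρ t = 1 := if_pos ht

lemma ind_nonneg (P : Prop) : 0 ≤ ind P := by
  unfold ind; split_ifs <;> norm_num

lemma ind_le_one (P : Prop) : ind P ≤ 1 := by
  unfold ind; split_ifs <;> norm_num

lemma margin_nonpos {g : Inp d → Fin C → ℝ} {cl : (Inp d → Fin C → ℝ) → Inp d → Fin C}
    (hcl : ∀ (g : Inp d → Fin C → ℝ) (x : Inp d) (y : Fin C), g x y ≤ g x (cl g x))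
    {x : Inp d} {y : Fin C} (h : y ≠ cl g x) : margin g x y ≤ 0 := by
  have hmem : g x (cl g x) ∈ g x '' {y' | y' ≠ y} := ⟨cl g x, h.symm, rfl⟩
  have hbdd : BddAbove (g x '' {y' | y' ≠ y}) := (Set.toFinite _).bddAbove
  have h1 : g x (cl g x) ≤ sSup (g x '' {y' | y' ≠ y}) := le_csSup hbdd hmem
  have h2 : g x y ≤ g x (cl g x) := hcl g x y
  have : g x y ≤ sSup (g x '' {y' | y' ≠ y}) := h2.trans h1
  simpa [margin] using this

lemma mem_ball_self {p ε : ℝ} (hp : 1 ≤ p) (hε : 0 < ε) (x : Inp d) : x ∈ ball p ε x := by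
  have hp0 : p ≠ 0 := by positivity
  have : pnorm p (fun i => x i - x i) = 0 := by
    simp [pnorm, sub_self, abs_zero, Real.zero_rpow hp0,
      Real.zero_rpow (one_div_ne_zero hp0), Real.zero_rpow (inv_ne_zero hp0)]
  simp only [ball, Set.mem_setOf_eq, this]
  exact hε.le

lemma pointwiseT {ρ : ℝ} (hρ : 0 < ρ) {f fs : Inp d → Fin C → ℝ}
    {cl : (Inp d → Fin C → ℝ) → Inp d → Fin C}
    (hcl : ∀ (g : Inp d → Fin C → ℝ) (x : Inp d) (y : Fin C), g x y ≤ g x (cl g x))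
    (x x' : Inp d) (y : Fin C) :
    ind (y ≠ cl f x') ≤ ramp ρ (margin f x' (cl fs x)) + ramp ρ (margin fs x y) := by
  by_cases h : cl fs x = y
  · subst h
    by_cases h2 : cl fs x = cl f x'
    · have : ind (cl fs x ≠ cl f x') = 0 := by simp [ind, h2]
      rw [this]
      exact add_nonneg (ramp_nonneg hρ _) (ramp_nonneg hρ _)
    · have h3 : margin f x' (cl fs x) ≤ 0 := margin_nonpos hcl h2
      have : ind (cl fs x ≠ cl f x') ≤ 1 := ind_le_one _
      rw [ramp_of_nonpos h3]
      have := ramp_nonneg hρ (margin fs x (cl fs x))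
      linarith
  · have h3 : margin fs x y ≤ 0 := margin_nonpos hcl (fun hy => h hy.symm)
    rw [ramp_of_nonpos h3]
    have := ramp_nonneg hρ (margin f x' (cl fs x))
    have := ind_le_one (y ≠ cl f x')
    linarith

lemma sSup_pointwiseT {ρ ε p : ℝ} (hρ : 0 < ρ) (hε : 0 < ε) (hp : 1 ≤ p)
    {f fs : Inp d → Fin C → ℝ} {cl : (Inp d → Fin C → ℝ) → Inp d → Fin C}
    (hcl : ∀ (g : Inp d → Fin C → ℝ) (x : Inp d) (y : Fin C), g x y ≤ g x (cl g x))
    (x : Inp d) (y : Fin C) :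
    sSup ((fun x' => ind (y ≠ cl f x')) '' ball p ε x) ≤
      sSup ((fun x' => ramp ρ (margin f x' (cl fs x))) '' ball p ε x) +
        ramp ρ (margin fs x y) := by
  have hbdd : BddAbove ((fun x' => ramp ρ (margin f x' (cl fs x))) '' ball p ε x) := by
    refine ⟨1, ?_⟩
    rintro a ⟨x', -, rfl⟩
    exact ramp_le_one hρ _
  have hSnn : 0 ≤ sSup ((fun x' => ramp ρ (margin f x' (cl fs x))) '' ball p ε x) := by
    have hmem : ramp ρ (margin f x (cl fs x)) ∈
        (fun x' => ramp ρ (margin f x' (cl fs x))) '' ball p ε x :=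
      ⟨x, mem_ball_self hp hε x, rfl⟩
    exact (ramp_nonneg hρ _).trans (le_csSup hbdd hmem)
  refine Real.sSup_le ?_ (add_nonneg hSnn (ramp_nonneg hρ _))
  rintro a ⟨x', hx', rfl⟩
  calc ind (y ≠ cl f x') ≤ ramp ρ (margin f x' (cl fs x)) + ramp ρ (margin fs x y) :=
        pointwiseT hρ hcl x x' y
    _ ≤ _ := by
        have : ramp ρ (margin f x' (cl fs x)) ≤
            sSup ((fun x' => ramp ρ (margin f x' (cl fs x))) '' ball p ε x) :=
          le_csSup hbdd ⟨x', hx', rfl⟩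
        linarith

lemma pointwiseS {ρ : ℝ} (hρ : 0 < ρ) {f fs : Inp d → Fin C → ℝ}
    {cl : (Inp d → Fin C → ℝ) → Inp d → Fin C}
    (hcl : ∀ (g : Inp d → Fin C → ℝ) (x : Inp d) (y : Fin C), g x y ≤ g x (cl g x))
    (x : Inp d) (y : Fin C) :
    ramp ρ (margin f x (cl fs x)) ≤ ramp ρ (margin f x y) + ramp ρ (margin fs x y) := by
  by_cases h : cl fs x = y
  · rw [h]
    have := ramp_nonneg hρ (margin fs x y)
    linarith
  · have h3 : margin fs x y ≤ 0 := margin_nonpos hcl (fun hy => h hy.symm)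
    rw [ramp_of_nonpos h3]
    have := ramp_nonneg hρ (margin f x y)
    have := ramp_le_one hρ (margin f x (cl fs x))
    linarith

end Aux

/-- **Proposition 4.3.** If `f* ∈ F` minimizes
`f ↦ R^{(ρ)}_T(f) + R^{(ρ)}_S(f)` over `F` and `λ = R^{(ρ)}_T(f*) + R^{(ρ)}_S(f*)`, then for
every `f ∈ F`:
`R^{rob}_T(f) ≤ R^{(ρ)}_S(f) + (disp^{rob,(ρ)}_{T_X}(f*, f) − disp^{(ρ)}_{S_X}(f*, f)) + λ`. -/
theorem robustRisk_le_marginRisk_add_disparity_gap {d C : ℕ} (hC : 2 ≤ C)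
    (ρ ε p : ℝ) (hρ : 0 < ρ) (hε : 0 < ε) (hp : 1 ≤ p)
    (S T : Measure (Inp d × Fin C)) [IsProbabilityMeasure S] [IsProbabilityMeasure T]
    (F : Set (Inp d → Fin C → ℝ))
    (cl : (Inp d → Fin C → ℝ) → Inp d → Fin C)
    (hcl : ∀ (g : Inp d → Fin C → ℝ) (x : Inp d) (y : Fin C), g x y ≤ g x (cl g x))
    (fs : Inp d → Fin C → ℝ) (hfsF : fs ∈ F)
    (hmin : ∀ g ∈ F, marginRisk ρ T fs + marginRisk ρ S fs ≤ marginRisk ρ T g + marginRisk ρ S g)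
    (hint1 : ∀ f ∈ F,
      Integrable (fun z => sSup ((fun x' => ind (z.2 ≠ cl f x')) '' ball p ε z.1)) T)
    (hint2 : ∀ f ∈ F, Integrable (fun z => ramp ρ (margin f z.1 z.2)) S)
    (hint3 : ∀ f ∈ F, Integrable (fun z => ramp ρ (margin f z.1 z.2)) T)
    (hint4 : ∀ f ∈ F, Integrable
      (fun x => sSup ((fun x' => ramp ρ (margin f x' (cl fs x))) '' ball p ε x))
      (T.map Prod.fst))
    (hint5 : ∀ f ∈ F, Integrable (fun x => ramp ρ (margin f x (cl fs x))) (S.map Prod.fst)) :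
    ∀ f ∈ F, robustRisk p ε T (cl f) ≤
      marginRisk ρ S f +
        (robMarginDisp p ε ρ (T.map Prod.fst) (cl fs) f -
          marginDisp ρ (S.map Prod.fst) (cl fs) f) +
        (marginRisk ρ T fs + marginRisk ρ S fs) := by
  intro f hf
  set G2 : Inp d → ℝ :=
    fun x => sSup ((fun x' => ramp ρ (margin f x' (cl fs x))) '' ball p ε x) with hG2
  have hG2m : AEStronglyMeasurable G2 (T.map Prod.fst) := (hint4 f hf).aestronglyMeasurable
  have hmapT : robMarginDisp p ε ρ (T.map Prod.fst) (cl fs) f = ∫ z, G2 z.1 ∂T := by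
    rw [robMarginDisp, integral_map measurable_fst.aemeasurable hG2m]
  have hG2int : Integrable (fun z : Inp d × Fin C => G2 z.1) T :=
    (integrable_map_measure hG2m measurable_fst.aemeasurable).mp (hint4 f hf)
  have step1 : robustRisk p ε T (cl f) ≤
      robMarginDisp p ε ρ (T.map Prod.fst) (cl fs) f + marginRisk ρ T fs := by
    rw [hmapT, robustRisk, marginRisk, ← integral_add hG2int (hint3 fs hfsF)]
    refine integral_mono (hint1 f hf) (hG2int.add (hint3 fs hfsF)) ?_
    intro z
    exact Aux.sSup_pointwiseT hρ hε hp hcl z.1 z.2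
  set G3 : Inp d → ℝ := fun x => ramp ρ (margin f x (cl fs x)) with hG3
  have hG3m : AEStronglyMeasurable G3 (S.map Prod.fst) := (hint5 f hf).aestronglyMeasurable
  have hmapS : marginDisp ρ (S.map Prod.fst) (cl fs) f = ∫ z, G3 z.1 ∂S := by
    rw [marginDisp, integral_map measurable_fst.aemeasurable hG3m]
  have hG3int : Integrable (fun z : Inp d × Fin C => G3 z.1) S :=
    (integrable_map_measure hG3m measurable_fst.aemeasurable).mp (hint5 f hf)
  have step2 : marginDisp ρ (S.map Prod.fst) (cl fs) f ≤
      marginRisk ρ S f + marginRisk ρ S fs := by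
    rw [hmapS, marginRisk, marginRisk, ← integral_add (hint2 f hf) (hint2 fs hfsF)]
    refine integral_mono hG3int ((hint2 f hf).add (hint2 fs hfsF)) ?_
    intro z
    exact Aux.pointwiseS hρ hcl z.1 z.2
  linarith


end RobustUDA
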